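/- Let θ ∈ ℝ∖ℚ and let H := ℤ + θℤ ⊆ ℝ. Let G be the direct limit of the constant sequence of abelian groups G_n := H ⊕ H with connecting homomorphisms f : H ⊕ H → H ⊕ H given by f(x,y) = (x + y, x + y). Then G is isomorphic, as an abelian group, to the subgroup ℤ[1/2] + ℤ·(θ/2)·ℤ-span of ℝ, i.e. to {p/2^n + θ q/2^n : p, q ∈ ℤ, n ∈ ℕ} ⊆ ℝ. -/

import Mathlib

/-- The transition homomorphisms `G i →+ G j` (for `i ≤ j`) generated by a sequence of
homomorphisms `G n →+ G (n+1)`. -/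
noncomputable def natTransMaps {G : ℕ → Type*} [∀ n, AddCommGroup (G n)]
    (f : ∀ n, G n →+ G (n + 1)) : ∀ i j : ℕ, i ≤ j → (G i →+ G j) :=
  fun i _ h => Nat.leRecOn h (fun {m} g => (f m).comp g) (AddMonoidHom.id (G i))

/-- The connecting homomorphism `H ⊕ H →+ H ⊕ H`, `(x, y) ↦ (x + y, x + y)`. -/
def doublingHom (H : AddSubgroup ℝ) : ↥H × ↥H →+ ↥H × ↥H where
  toFun p := (p.1 + p.2, p.1 + p.2)
  map_zero' := by simp
  map_add' p q := by
    ext <;> simp <;> ring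

lemma natTransMaps_self {G : ℕ → Type*} [∀ n, AddCommGroup (G n)]
    (f : ∀ n, G n →+ G (n + 1)) (i : ℕ) (h : i ≤ i) :
    natTransMaps f i i h = AddMonoidHom.id (G i) :=
  Nat.leRecOn_self _

lemma natTransMaps_succ {G : ℕ → Type*} [∀ n, AddCommGroup (G n)]
    (f : ∀ n, G n →+ G (n + 1)) (i j : ℕ) (h : i ≤ j) (h' : i ≤ j + 1) :
    natTransMaps f i (j + 1) h' = (f j).comp (natTransMaps f i j h) :=
  Nat.leRecOn_succ h _

/-- The target subgroup `{p/2ⁿ + θq/2ⁿ}`. -/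
def halfGroup (θ : ℝ) : AddSubgroup ℝ where
  carrier := {x : ℝ | ∃ (p q : ℤ) (n : ℕ), x = (p : ℝ) / 2 ^ n + θ * q / 2 ^ n}
  zero_mem' := ⟨0, 0, 0, by simp⟩
  add_mem' := by
    rintro a b ⟨p, q, n, rfl⟩ ⟨p', q', m, rfl⟩
    refine ⟨p * 2 ^ m + p' * 2 ^ n, q * 2 ^ m + q' * 2 ^ n, n + m, ?_⟩
    have h1 : ((2 : ℝ) ^ n) ≠ 0 := by positivity
    have h2 : ((2 : ℝ) ^ m) ≠ 0 := by positivity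
    push_cast
    rw [pow_add]
    field_simp
    ring
  neg_mem' := by
    rintro a ⟨p, q, n, rfl⟩
    exact ⟨-p, -q, n, by push_cast; ring⟩

/-- For irrational `θ` and `H := ℤ + θℤ ⊆ ℝ`, the direct limit of the
constant sequence `H ⊕ H` with connecting maps `(x,y) ↦ (x+y, x+y)` is isomorphic as an
abelian group to `{p/2ⁿ + θq/2ⁿ : p, q ∈ ℤ, n ∈ ℕ} ⊆ ℝ`. -/
theorem directLimit_doubling_iso (θ : ℝ) (hθ : Irrational θ) :
    ∃ H' : AddSubgroup ℝ,
      (H' : Set ℝ) =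
        {x : ℝ | ∃ (p q : ℤ) (n : ℕ), x = (p : ℝ) / 2 ^ n + θ * q / 2 ^ n} ∧
      Nonempty
        (AddCommGroup.DirectLimit
            (fun _ : ℕ => ↥(AddSubgroup.closure {(1 : ℝ), θ}) ×
              ↥(AddSubgroup.closure {(1 : ℝ), θ}))
            (natTransMaps fun _ => doublingHom (AddSubgroup.closure {(1 : ℝ), θ})) ≃+
          ↥H') := by
  classical
  set H := AddSubgroup.closure {(1 : ℝ), θ} with hH
  refine ⟨halfGroup θ, rfl, ?_⟩
  set f : ∀ _ : ℕ, ↥H × ↥H →+ ↥H × ↥H := fun _ => doublingHom H with hf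
  set F := natTransMaps f with hF
  -- the compatible family of maps into `halfGroup θ`
  have mem_half : ∀ (i : ℕ) (x : ↥H × ↥H),
      ((x.1 : ℝ) + x.2) / 2 ^ (i + 1) ∈ halfGroup θ := by
    intro i x
    have hx : ((x.1 : ℝ) + x.2) ∈ H := add_mem x.1.2 x.2.2
    obtain ⟨p, q, hpq⟩ := AddSubgroup.mem_closure_pair.1 hx
    refine ⟨p, q, i + 1, ?_⟩
    rw [← hpq]
    push_cast [zsmul_eq_mul]
    ring
  set g : ∀ i : ℕ, ↥H × ↥H →+ ↥(halfGroup θ) := fun i =>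
    { toFun := fun x => ⟨((x.1 : ℝ) + x.2) / 2 ^ (i + 1), mem_half i x⟩
      map_zero' := by ext; simp
      map_add' := fun x y => by
        ext
        push_cast
        show ((x.1 : ℝ) + y.1 + (x.2 + y.2)) / 2 ^ (i + 1) = _
        ring } with hg
  have hstep : ∀ (j : ℕ) (v : ↥H × ↥H), g (j + 1) (f j v) = g j v := by
    intro j v
    ext
    show (((v.1 : ℝ) + v.2) + ((v.1 : ℝ) + v.2)) / 2 ^ (j + 2) =
      ((v.1 : ℝ) + v.2) / 2 ^ (j + 1)
    have h2 : ((2 : ℝ) ^ (j + 2)) = 2 * 2 ^ (j + 1) := by ring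
    rw [h2]
    field_simp
    ring
  have Hg : ∀ (i j : ℕ) (hij : i ≤ j) (x : ↥H × ↥H), g j (F i j hij x) = g i x := by
    intro i j hij
    induction j, hij using Nat.le_induction with
    | base => intro x; rw [hF, natTransMaps_self]; rfl
    | succ j hij ih =>
      intro x
      rw [hF, natTransMaps_succ f i j hij]
      simp only [AddMonoidHom.comp_apply]
      rw [hstep]
      exact ih x
  set φ := AddCommGroup.DirectLimit.lift _ F _ g Hg with hφ
  have hsurj : Function.Surjective φ := by
    rintro ⟨z, p, q, n, rfl⟩
    have hmem : ((p : ℝ) + θ * q) ∈ H := by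
      exact AddSubgroup.mem_closure_pair.2 ⟨p, q, by push_cast [zsmul_eq_mul]; ring⟩
    refine ⟨AddCommGroup.DirectLimit.of _ F n (⟨_, hmem⟩, ⟨_, hmem⟩), ?_⟩
    rw [hφ, AddCommGroup.DirectLimit.lift_of]
    ext
    show (((p : ℝ) + θ * q) + ((p : ℝ) + θ * q)) / 2 ^ (n + 1) = (p : ℝ) / 2 ^ n + θ * q / 2 ^ n
    have h2 : ((2 : ℝ) ^ (n + 1)) = 2 * 2 ^ n := by ring
    have hn : ((2 : ℝ) ^ n) ≠ 0 := by positivity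
    rw [h2]
    field_simp
    ring
  have hinj : Function.Injective φ := by
    rw [injective_iff_map_eq_zero]
    intro z hz
    induction z using AddCommGroup.DirectLimit.induction_on with
    | ih i x =>
      rw [hφ, AddCommGroup.DirectLimit.lift_of] at hz
      have hval : ((x.1 : ℝ) + x.2) / 2 ^ (i + 1) = 0 := congrArg Subtype.val hz
      have hsum : (x.1 : ℝ) + x.2 = 0 := by
        have h2 : ((2 : ℝ) ^ (i + 1)) ≠ 0 := by positivity
        field_simp at hval
        simpa only [mul_zero] using hval
      have hzero : F i (i + 1) (Nat.le_succ i) x = 0 := by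
        rw [hF, natTransMaps_succ f i i le_rfl, natTransMaps_self]
        ext <;> simpa [hf, doublingHom] using hsum
      calc AddCommGroup.DirectLimit.of _ F i x
          = AddCommGroup.DirectLimit.of _ F (i + 1) (F i (i + 1) (Nat.le_succ i) x) :=
            (AddCommGroup.DirectLimit.of_f _ _).symm
        _ = 0 := by rw [hzero, map_zero]
  exact ⟨AddEquiv.ofBijective φ ⟨hinj, hsurj⟩⟩
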